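/- For every n ∈ {1,…,d+1}, the set S_n is a chain-complete subset of V^d: for every nonempty chain C ⊆ S_n, the supremum and the infimum of C (taken in V^d) belong to S_n. -/

import Mathlib

open scoped Classical

/-- `Δ(τ̄)_i = δ(τ₁,…,τ_{i−1},τ_i,τ_i,…,τ_i)` (with 0-based indices, the `j`-th
argument of `δ` is `τ_{min i j}`). -/
def Delta {V : Type*} [CompleteLattice V] {d : ℕ} (δ : (Fin d → V) → V)
    (τ : Fin d → V) : Fin d → V :=
  fun i => δ (fun j => τ (min i j))

/-- `δ` is chain-continuous: it commutes with suprema and infima of nonempty chains. -/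
def ChainContinuous {V : Type*} [CompleteLattice V] {d : ℕ} (δ : (Fin d → V) → V) : Prop :=
  ∀ C : Set (Fin d → V), C.Nonempty → IsChain (· ≤ ·) C →
    δ (sSup C) = sSup (δ '' C) ∧ δ (sInf C) = sInf (δ '' C)

/-- The parity order `1 ≺ 3 ≺ 5 ≺ ⋯ ≺ 6 ≺ 4 ≺ 2` (on positive naturals). -/
def ParityLE (m n : ℕ) : Prop :=
  (Odd m ∧ Even n) ∨ (Odd m ∧ Odd n ∧ m ≤ n) ∨ (Even m ∧ Even n ∧ n ≤ m)

/-- `τ̄` is ordered: `τ_i ≤ τ_j` whenever `i ⪯ j` in the parity order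
(1-based positions). -/
def IsOrdered {V : Type*} [CompleteLattice V] {d : ℕ} (τ : Fin d → V) : Prop :=
  ∀ i j : Fin d, ParityLE (i.val + 1) (j.val + 1) → τ i ≤ τ j

/-- `τ̄` is `n`-fixed: all coordinates at 1-based positions `≥ n` are equal
(to the coordinate at position `n`). -/
def IsNFixed {V : Type*} {d : ℕ} (n : ℕ) (τ : Fin d → V) : Prop :=
  ∀ i j : Fin d, n ≤ i.val + 1 → n ≤ j.val + 1 → τ i = τ j

/-- `τ̄` is `n`-saturated: `Δ(τ̄)_i = τ_i` for all 1-based positions `i ≤ n − 1`. -/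
def IsNSaturated {V : Type*} [CompleteLattice V] {d : ℕ} (δ : (Fin d → V) → V)
    (n : ℕ) (τ : Fin d → V) : Prop :=
  ∀ i : Fin d, i.val + 2 ≤ n → Delta δ τ i = τ i

/-- The set `S_n ⊆ V^d`. -/
def SN {V : Type*} [CompleteLattice V] {d : ℕ} (δ : (Fin d → V) → V) (n : ℕ) :
    Set (Fin d → V) :=
  {τ | IsOrdered τ ∧ IsNFixed n τ ∧ IsNSaturated δ n τ ∧
    (Odd n → τ ≤ Delta δ τ) ∧ (Even n → Delta δ τ ≤ τ)}


section Aux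

variable {V : Type*} [CompleteLattice V] {d : ℕ} {δ : (Fin d → V) → V}

lemma delta_sSup (hcont : ChainContinuous δ) {C : Set (Fin d → V)} (hne : C.Nonempty)
    (hchain : IsChain (· ≤ ·) C) (i : Fin d) :
    Delta δ (sSup C) i = ⨆ τ : C, Delta δ (τ : Fin d → V) i := by
  set f : (Fin d → V) → (Fin d → V) := fun τ j => τ (min i j) with hf
  have hfmono : ∀ a b : Fin d → V, a ≤ b → f a ≤ f b := fun a b h j => h _
  have hDchain : IsChain (· ≤ ·) (f '' C) := hchain.image_of_map_rel _ _ f hfmono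
  have key : f (sSup C) = sSup (f '' C) := by
    funext j
    show sSup C (min i j) = sSup (f '' C) j
    rw [sSup_image', iSup_apply, sSup_apply]
  have h1 : Delta δ (sSup C) i = δ (sSup (f '' C)) := by rw [← key]; rfl
  rw [h1, (hcont _ (hne.image f) hDchain).1, Set.image_image, sSup_image']
  rfl

lemma delta_sInf (hcont : ChainContinuous δ) {C : Set (Fin d → V)} (hne : C.Nonempty)
    (hchain : IsChain (· ≤ ·) C) (i : Fin d) :
    Delta δ (sInf C) i = ⨅ τ : C, Delta δ (τ : Fin d → V) i := by
  set f : (Fin d → V) → (Fin d → V) := fun τ j => τ (min i j) with hf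
  have hfmono : ∀ a b : Fin d → V, a ≤ b → f a ≤ f b := fun a b h j => h _
  have hDchain : IsChain (· ≤ ·) (f '' C) := hchain.image_of_map_rel _ _ f hfmono
  have key : f (sInf C) = sInf (f '' C) := by
    funext j
    show sInf C (min i j) = sInf (f '' C) j
    rw [sInf_image', iInf_apply, sInf_apply]
  have h1 : Delta δ (sInf C) i = δ (sInf (f '' C)) := by rw [← key]; rfl
  rw [h1, (hcont _ (hne.image f) hDchain).2, Set.image_image, sInf_image']
  rfl

end Aux

/-- For `n ∈ {1,…,d+1}`, the set `S_n` is a chain-complete subset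
of `V^d`: the supremum and the infimum (taken in `V^d`) of every nonempty chain
`C ⊆ S_n` belong to `S_n`. -/
theorem stmt5 {V : Type*} [CompleteLattice V] {d : ℕ} (hd : 1 ≤ d) (hde : Even d)
    (δ : (Fin d → V) → V) (hmono : Monotone δ) (hcont : ChainContinuous δ)
    (n : ℕ) (hn1 : 1 ≤ n) (hnd : n ≤ d + 1) :
    ∀ C : Set (Fin d → V), C ⊆ SN δ n → C.Nonempty → IsChain (· ≤ ·) C →
      sSup C ∈ SN δ n ∧ sInf C ∈ SN δ n := by
  intro C hCS hne hchain
  constructor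
  · refine ⟨?_, ?_, ?_, ?_, ?_⟩
    · intro i j hp
      rw [sSup_apply, sSup_apply]
      exact iSup_mono fun τ => (hCS τ.2).1 i j hp
    · intro i j hi hj
      rw [sSup_apply, sSup_apply]
      exact iSup_congr fun τ => (hCS τ.2).2.1 i j hi hj
    · intro i hi
      rw [delta_sSup hcont hne hchain i, sSup_apply]
      exact iSup_congr fun τ => (hCS τ.2).2.2.1 i hi
    · intro ho i
      rw [sSup_apply, delta_sSup hcont hne hchain i]
      exact iSup_mono fun τ => (hCS τ.2).2.2.2.1 ho i
    · intro he i
      rw [sSup_apply, delta_sSup hcont hne hchain i]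
      exact iSup_mono fun τ => (hCS τ.2).2.2.2.2 he i
  · refine ⟨?_, ?_, ?_, ?_, ?_⟩
    · intro i j hp
      rw [sInf_apply, sInf_apply]
      exact iInf_mono fun τ => (hCS τ.2).1 i j hp
    · intro i j hi hj
      rw [sInf_apply, sInf_apply]
      exact iInf_congr fun τ => (hCS τ.2).2.1 i j hi hj
    · intro i hi
      rw [delta_sInf hcont hne hchain i, sInf_apply]
      exact iInf_congr fun τ => (hCS τ.2).2.2.1 i hi
    · intro ho i
      rw [sInf_apply, delta_sInf hcont hne hchain i]
      exact iInf_mono fun τ => (hCS τ.2).2.2.2.1 ho i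
    · intro he i
      rw [sInf_apply, delta_sInf hcont hne hchain i]
      exact iInf_mono fun τ => (hCS τ.2).2.2.2.2 he i
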